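/- Let f(I) = min(1, I·N/U, r·N/U) - I/U for I ≥ 0, where N ≥ 1 is an integer, and r, U > 0. If U ≤ N·r then sup_{I≥0} f(I) = 1 - 1/N, attained at I = U/N; if U ≥ N·r then sup_{I≥0} f(I) = r(N-1)/U, attained at I = r. In both cases the supremum equals (1 - 1/N)·min(1, N·r/U). -/

import Mathlib

/-- The bound f(I) = min(1, I·N/U, r·N/U) - I/U on the efficiency of a seeder set
with total bandwidth U and total input I, in a perfect system with N leechers. -/
noncomputable def effBound (N : ℕ) (r U I : ℝ) : ℝ :=
  min 1 (min (I * N / U) (r * N / U)) - I / U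

/-- If U ≤ N·r then sup_{I≥0} f(I) = 1 - 1/N, attained at I = U/N;
if U ≥ N·r then sup_{I≥0} f(I) = r(N-1)/U, attained at I = r.
In both cases the supremum equals (1 - 1/N)·min(1, N·r/U). -/
lemma eff_ub (N : ℕ) (hN : 1 ≤ N) (r U : ℝ) (hr : 0 < r) (hU : 0 < U)
    (I : ℝ) (hI : 0 ≤ I) :
    effBound N r U I ≤ (1 - 1/(N:ℝ)) * min 1 ((N:ℝ)*r/U) := by
  have hn : (1:ℝ) ≤ N := by exact_mod_cast hN
  have hv : 0 < U⁻¹ := inv_pos.mpr hU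
  unfold effBound
  rcases le_total ((N:ℝ)*r/U) 1 with hA | hA
  · rw [min_eq_right hA]
    rcases le_total I r with hB | hB
    · have h1 : min 1 (min (I*(N:ℝ)/U) (r*(N:ℝ)/U)) ≤ I*(N:ℝ)/U :=
        (min_le_right _ _).trans (min_le_left _ _)
      simp only [div_eq_mul_inv] at *
      have hNinv : ((N:ℝ))⁻¹ * N = 1 := inv_mul_cancel₀ (by linarith)
      nlinarith [hNinv, mul_nonneg (mul_nonneg (sub_nonneg.mpr hB) (sub_nonneg.mpr hn)) hv.le]
    · have h1 : min 1 (min (I*(N:ℝ)/U) (r*(N:ℝ)/U)) ≤ r*(N:ℝ)/U :=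
        (min_le_right _ _).trans (min_le_right _ _)
      simp only [div_eq_mul_inv] at *
      have hNinv : ((N:ℝ))⁻¹ * N = 1 := inv_mul_cancel₀ (by linarith)
      nlinarith [hNinv, mul_le_mul_of_nonneg_right hB hv.le]
  · rw [min_eq_left hA]
    rcases le_total (I*(N:ℝ)/U) 1 with hB | hB
    · have h1 : min 1 (min (I*(N:ℝ)/U) (r*(N:ℝ)/U)) ≤ I*(N:ℝ)/U :=
        (min_le_right _ _).trans (min_le_left _ _)
      have hn0 : (0:ℝ) < N := by linarith
      rw [div_le_one hU] at hB
      have key : I * (N:ℝ) / U - I / U ≤ 1 - 1/(N:ℝ) := by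
        rw [div_sub_div _ _ hU.ne' hU.ne', sub_div' hn0.ne',
          div_le_div_iff₀ (by positivity) hn0]
        nlinarith [mul_le_mul_of_nonneg_right hB (mul_nonneg hU.le (sub_nonneg.mpr hn))]
      linarith
    · have h1 : min 1 (min (I*(N:ℝ)/U) (r*(N:ℝ)/U)) ≤ 1 := min_le_left _ _
      have hn0 : (0:ℝ) < N := by linarith
      rw [le_div_iff₀ hU] at hB
      have key : 1/(N:ℝ) ≤ I / U := by
        rw [div_le_div_iff₀ hn0 hU]; nlinarith
      linarith

lemma eff_at1 (N : ℕ) (hN : 1 ≤ N) (r U : ℝ) (hr : 0 < r) (hU : 0 < U)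
    (h : U ≤ N * r) : effBound N r U (U / N) = 1 - 1/(N:ℝ) := by
  have hn0 : (0:ℝ) < N := by exact_mod_cast hN
  unfold effBound
  have e1 : U / (N:ℝ) * N / U = 1 := by field_simp
  have e2 : (1:ℝ) ≤ r * N / U := by rw [le_div_iff₀ hU]; nlinarith
  rw [e1, min_eq_left e2, min_self]
  rw [div_div]
  field_simp
lemma eff_at2 (N : ℕ) (hN : 1 ≤ N) (r U : ℝ) (hr : 0 < r) (hU : 0 < U)
    (h : (N:ℝ) * r ≤ U) : effBound N r U r = r*((N:ℝ)-1)/U := by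
  have hn0 : (0:ℝ) < N := by exact_mod_cast hN
  unfold effBound
  have e2 : r * N / U ≤ 1 := by rw [div_le_one hU]; nlinarith
  rw [min_self, min_eq_right e2]
  field_simp

theorem stmt6 (N : ℕ) (hN : 1 ≤ N) (r U : ℝ) (hr : 0 < r) (hU : 0 < U) :
    (U ≤ N * r →
      IsGreatest {y : ℝ | ∃ I : ℝ, 0 ≤ I ∧ y = effBound N r U I} (1 - 1/(N:ℝ)) ∧
      effBound N r U (U / N) = 1 - 1/(N:ℝ)) ∧
    ((N:ℝ) * r ≤ U →
      IsGreatest {y : ℝ | ∃ I : ℝ, 0 ≤ I ∧ y = effBound N r U I} (r*((N:ℝ)-1)/U) ∧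
      effBound N r U r = r*((N:ℝ)-1)/U) ∧
    IsGreatest {y : ℝ | ∃ I : ℝ, 0 ≤ I ∧ y = effBound N r U I}
      ((1 - 1/(N:ℝ)) * min 1 ((N:ℝ)*r/U)) := by
  have hn0 : (0:ℝ) < N := by exact_mod_cast hN
  have hn : (1:ℝ) ≤ N := by exact_mod_cast hN
  refine ⟨fun h => ?_, fun h => ?_, ?_⟩
  · have hmin : (1:ℝ) ≤ (N:ℝ)*r/U := by rw [le_div_iff₀ hU]; nlinarith
    refine ⟨⟨⟨U/N, by positivity, (eff_at1 N hN r U hr hU h).symm⟩, ?_⟩,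
      eff_at1 N hN r U hr hU h⟩
    rintro y ⟨I, hI, rfl⟩
    have := eff_ub N hN r U hr hU I hI
    rw [min_eq_left hmin, mul_one] at this
    exact this
  · have hmin : (N:ℝ)*r/U ≤ 1 := by rw [div_le_one hU]; nlinarith
    refine ⟨⟨⟨r, hr.le, (eff_at2 N hN r U hr hU h).symm⟩, ?_⟩,
      eff_at2 N hN r U hr hU h⟩
    rintro y ⟨I, hI, rfl⟩
    have := eff_ub N hN r U hr hU I hI
    rw [min_eq_right hmin] at this
    calc effBound N r U I ≤ _ := this
      _ = r*((N:ℝ)-1)/U := by field_simp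
  · rcases le_total U ((N:ℝ)*r) with h | h
    · have hmin : (1:ℝ) ≤ (N:ℝ)*r/U := by rw [le_div_iff₀ hU]; nlinarith
      refine ⟨⟨U/N, by positivity, ?_⟩, fun y ⟨I, hI, hy⟩ => hy ▸ eff_ub N hN r U hr hU I hI⟩
      rw [min_eq_left hmin, mul_one, eff_at1 N hN r U hr hU (by exact_mod_cast h)]
    · have hmin : (N:ℝ)*r/U ≤ 1 := by rw [div_le_one hU]; nlinarith
      refine ⟨⟨r, hr.le, ?_⟩, fun y ⟨I, hI, hy⟩ => hy ▸ eff_ub N hN r U hr hU I hI⟩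
      rw [min_eq_right hmin, eff_at2 N hN r U hr hU h]
      field_simp
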